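/- (Crossing-change isomorphism.) The maps c+ : C(D−) → C(D+) defined by c+(c1, c0) = (I10 c1 + (x0 − x1 − x2 + x3)·c0, I01 c0) and c− : C(D+) → C(D−) defined by c−(c0, c1) = (I01 c0 − (x0 − x1 − x2 + x3)·c1, I10 c1) are chain maps (c+∘D− = D+∘c+ and c−∘D+ = D−∘c−) and are mutually inverse isomorphisms: c+∘c− = id and c−∘c+ = id. -/

import Mathlib

noncomputable section

/-- The base ring `R = ℤ[x0, x1, x2, x3]`. -/
abbrev RR : Type := MvPolynomial (Fin 4) ℤ

def x0 : RR := MvPolynomial.X 0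
def x1 : RR := MvPolynomial.X 1
def x2 : RR := MvPolynomial.X 2
def x3 : RR := MvPolynomial.X 3

/-- `θ = x1 − x2 + x3 − x0`. -/
def th : RR := x1 - x2 + x3 - x0

/-- The potential `w = (x0 − x2)·(x1 − x3)·θ`. -/
def ww : RR := (x0 - x2) * (x1 - x3) * th

/-- The `R`-linear map on `R × R` sending `(x, y) ↦ (p·y, q·x)`; with respect to the
basis `u = (1,0)`, `v = (0,1)` it sends `u ↦ q·v` and `v ↦ p·u`. -/
def od (p q : RR) : (RR × RR) →ₗ[RR] (RR × RR) :=
  LinearMap.prod (p • LinearMap.snd RR RR RR) (q • LinearMap.fst RR RR RR)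

/-- The differential of `C(D0)`: `d0 u0 = (x0 − x2)·v0`, `d0 v0 = (x1 − x3)·θ·u0`. -/
def d0 : (RR × RR) →ₗ[RR] (RR × RR) := od ((x1 - x3) * th) (x0 - x2)

/-- The differential of `C(D1)`: `d1 u1 = (x1 − x3)·v1`, `d1 v1 = (x0 − x2)·θ·u1`. -/
def d1 : (RR × RR) →ₗ[RR] (RR × RR) := od ((x0 - x2) * th) (x1 - x3)

/-- The saddle map `s01 : C(D0) → C(D1)`: `s01 u0 = −v1`, `s01 v0 = θ·u1`. -/
def s01 : (RR × RR) →ₗ[RR] (RR × RR) := od th (-1)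

/-- The saddle map `s10 : C(D1) → C(D0)`: `s10 u1 = −v0`, `s10 v1 = θ·u0`. -/
def s10 : (RR × RR) →ₗ[RR] (RR × RR) := od th (-1)

/-- The map `I01 : C(D0) → C(D1)`: `I01 u0 = u1`, `I01 v0 = v1`. -/
def I01 : (RR × RR) →ₗ[RR] (RR × RR) := LinearMap.id

/-- The map `I10 : C(D1) → C(D0)`: `I10 u1 = u0`, `I10 v1 = v0`. -/
def I10 : (RR × RR) →ₗ[RR] (RR × RR) := LinearMap.id

/-- The first/second projections of `C0 × C1` (or `C1 × C0`). -/
def pr1 : ((RR × RR) × (RR × RR)) →ₗ[RR] (RR × RR) := LinearMap.fst RR (RR × RR) (RR × RR)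
def pr2 : ((RR × RR) × (RR × RR)) →ₗ[RR] (RR × RR) := LinearMap.snd RR (RR × RR) (RR × RR)

/-- The differential of `C(D+) = C0 × C1`: `D+ (c0, c1) = (d0 c0, −s01 c0 + d1 c1)`. -/
def Dplus : ((RR × RR) × (RR × RR)) →ₗ[RR] ((RR × RR) × (RR × RR)) :=
  LinearMap.prod (d0 ∘ₗ pr1) (-(s01 ∘ₗ pr1) + d1 ∘ₗ pr2)

/-- The differential of `C(D−) = C1 × C0`: `D− (c1, c0) = (d1 c1, −s10 c1 + d0 c0)`. -/
def Dminus : ((RR × RR) × (RR × RR)) →ₗ[RR] ((RR × RR) × (RR × RR)) :=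
  LinearMap.prod (d1 ∘ₗ pr1) (-(s10 ∘ₗ pr1) + d0 ∘ₗ pr2)

/-- The crossing-change map `c+ : C(D−) → C(D+)`,
`c+ (c1, c0) = (I10 c1 + (x0 − x1 − x2 + x3)·c0, I01 c0)`. -/
def cplus : ((RR × RR) × (RR × RR)) →ₗ[RR] ((RR × RR) × (RR × RR)) :=
  LinearMap.prod (I10 ∘ₗ pr1 + (x0 - x1 - x2 + x3) • pr2) (I01 ∘ₗ pr2)

/-- The crossing-change map `c− : C(D+) → C(D−)`,
`c− (c0, c1) = (I01 c0 − (x0 − x1 − x2 + x3)·c1, I10 c1)`. -/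
def cminus : ((RR × RR) × (RR × RR)) →ₗ[RR] ((RR × RR) × (RR × RR)) :=
  LinearMap.prod (I01 ∘ₗ pr1 - (x0 - x1 - x2 + x3) • pr2) (I10 ∘ₗ pr2)

/-- Crossing-change isomorphism. The maps `c+` and `c−` are chain
maps and mutually inverse isomorphisms. -/
theorem stmt_7 :
    cplus ∘ₗ Dminus = Dplus ∘ₗ cplus ∧
    cminus ∘ₗ Dplus = Dminus ∘ₗ cminus ∧
    cplus ∘ₗ cminus = LinearMap.id ∧
    cminus ∘ₗ cplus = LinearMap.id := by
  refine ⟨?_, ?_, ?_, ?_⟩ <;>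
  · apply LinearMap.ext; rintro ⟨⟨a, b⟩, c, d⟩
    simp only [cplus, cminus, Dplus, Dminus, d0, d1, s01, s10, I01, I10, pr1, pr2, od, th,
      LinearMap.comp_apply, LinearMap.prod_apply, LinearMap.add_apply, LinearMap.sub_apply,
      LinearMap.neg_apply, LinearMap.smul_apply, LinearMap.fst_apply, LinearMap.snd_apply,
      LinearMap.id_apply, Function.prod, Prod.mk_add_mk, Prod.mk_sub_mk, Prod.smul_mk, smul_eq_mul, Prod.neg_mk,
      Prod.mk.injEq]
    constructor <;> constructor <;> ring

end
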